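/- Let λ(x) = exp(2πi a x/n) be an additive character of Z/nZ with d = gcd(a,n), and χ a multiplicative character of (Z/nZ)* with conductor f. If f ∤ n/d then G(Z/nZ, χ, λ) = 0; if f | n/d then G(Z/nZ, χ, λ) = (φ(n)/φ(n/d)) · G(Z/(n/d)Z, χ', λ), where χ' is the character of (Z/(n/d)Z)* induced by χ. -/

import Mathlib

open scoped BigOperators

/-- The additive character value `exp(2πi a v / N)`. -/
noncomputable def addChar (N : ℕ) (a : ℤ) (v : ℕ) : ℂ :=
  Complex.exp (2 * Real.pi * Complex.I * a * v / N)

lemma addChar_congr (n : ℕ) [NeZero n] (a : ℤ) (d : ℕ) [NeZero (n / d)]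
    (hd : d = Int.gcd a n) {v w : ℕ}
    (h : (v : ZMod (n / d)) = (w : ZMod (n / d))) : addChar n a v = addChar n a w := by
  have hd0 : d ≠ 0 := by
    intro h0
    have : n = 0 := by
      have := hd.symm.trans (congrArg id rfl)
      have : Int.gcd a n = 0 := by omega
      exact_mod_cast (Int.gcd_eq_zero_iff.mp this).2
    exact (NeZero.ne n) this
  have hdn : d ∣ n := by
    have := Int.gcd_dvd_right (a := a) (b := (n : ℤ))
    rw [← hd] at this
    exact_mod_cast this
  have hda : (d : ℤ) ∣ a := by
    have := Int.gcd_dvd_left (a := a) (b := (n : ℤ))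
    rw [← hd] at this
    exact this
  obtain ⟨a', ha'⟩ := hda
  have hmod : ((n / d : ℕ) : ℤ) ∣ (w : ℤ) - (v : ℤ) := by
    have hvw : v ≡ w [MOD n / d] := (ZMod.natCast_eq_natCast_iff _ _ _).mp h
    exact_mod_cast (Nat.modEq_iff_dvd).mp hvw
  obtain ⟨k, hk⟩ := hmod
  have hn0 : (n : ℂ) ≠ 0 := Nat.cast_ne_zero.mpr (NeZero.ne n)
  have hdc0 : (d : ℂ) ≠ 0 := Nat.cast_ne_zero.mpr hd0
  have hm0 : ((n / d : ℕ) : ℂ) ≠ 0 := Nat.cast_ne_zero.mpr (NeZero.ne _)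
  have hnd : ((n : ℂ)) = (d : ℂ) * ((n / d : ℕ) : ℂ) := by
    exact_mod_cast congrArg (Nat.cast : ℕ → ℂ) (Nat.mul_div_cancel' hdn).symm
  have hw : (w : ℂ) = (v : ℂ) + ((n / d : ℕ) : ℂ) * (k : ℂ) := by
    have : (w : ℤ) = (v : ℤ) + ((n / d : ℕ) : ℤ) * k := by linarith
    calc (w : ℂ) = ((w : ℤ) : ℂ) := by push_cast; ring
      _ = (((v : ℤ) + ((n / d : ℕ) : ℤ) * k : ℤ) : ℂ) := by rw [this]
      _ = (v : ℂ) + ((n / d : ℕ) : ℂ) * (k : ℂ) := by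
            simp only [Int.cast_add, Int.cast_mul, Int.cast_natCast]
  have ha'' : (a : ℂ) = (d : ℂ) * (a' : ℂ) := by exact_mod_cast congrArg (Int.cast : ℤ → ℂ) ha'
  have key : (2 * (Real.pi : ℂ) * Complex.I * a * w / n : ℂ)
      = 2 * (Real.pi : ℂ) * Complex.I * a * v / n
        + ((a' * k : ℤ) : ℂ) * (2 * (Real.pi : ℂ) * Complex.I) := by
    rw [hw, ha'', hnd]
    push_cast
    field_simp
  unfold addChar
  rw [key, Complex.exp_add, Complex.exp_int_mul_two_pi_mul_I, mul_one]

lemma sum_comp_surjective {G H : Type*} [Group G] [Group H] [Fintype G] [Fintype H]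
    [DecidableEq H] (f : G →* H) (hf : Function.Surjective f) (g : H → ℂ) :
    ∑ x : G, g (f x) = ((Fintype.card G : ℂ) / (Fintype.card H : ℂ)) * ∑ y : H, g y := by
  classical
  set c := (Finset.univ.filter fun x : G => f x = 1).card with hc
  have hcard : ∀ y : H, (Finset.univ.filter fun x : G => f x = y).card = c := by
    intro y
    obtain ⟨x₀, hx₀⟩ := hf y
    rw [hc]
    apply Finset.card_bij (fun x _ => x₀⁻¹ * x)
    · intro x hx
      simp only [Finset.mem_filter, Finset.mem_univ, true_and] at hx ⊢
      rw [map_mul, map_inv, hx₀, hx, inv_mul_cancel]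
    · intro x hx y' hy' hxy
      exact mul_left_cancel hxy
    · intro z hz
      refine ⟨x₀ * z, ?_, by group⟩
      simp only [Finset.mem_filter, Finset.mem_univ, true_and] at hz ⊢
      rw [map_mul, hx₀, hz, mul_one]
  have htot : Fintype.card G = Fintype.card H * c := by
    rw [← Finset.card_univ,
      Finset.card_eq_sum_card_fiberwise (fun x _ => Finset.mem_univ (f x))]
    simp [hcard, Finset.card_univ, mul_comm]
  have hH : (Fintype.card H : ℂ) ≠ 0 := Nat.cast_ne_zero.mpr Fintype.card_ne_zero
  have hstep : ∑ x : G, g (f x) = (c : ℂ) * ∑ y : H, g y := by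
    rw [← Finset.sum_fiberwise_of_maps_to (fun x _ => Finset.mem_univ (f x))
      (fun x => g (f x)), Finset.mul_sum]
    refine Finset.sum_congr rfl fun y _ => ?_
    have hgy : ∀ x ∈ Finset.univ.filter (fun x : G => f x = y), g (f x) = g y := by
      intro x hx; simp only [Finset.mem_filter] at hx; rw [hx.2]
    rw [Finset.sum_congr rfl hgy, Finset.sum_const, hcard y, nsmul_eq_mul]
  rw [hstep]
  congr 1
  rw [htot]
  push_cast
  field_simp

lemma unitsMap_val {n t : ℕ} (h : t ∣ n) (x : (ZMod n)ˣ) :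
    ((ZMod.unitsMap h x : (ZMod t)ˣ) : ZMod t) = ZMod.castHom h (ZMod t) (x : ZMod n) := rfl

lemma unitsMap_val' {n t : ℕ} [NeZero n] (h : t ∣ n) (x : (ZMod n)ˣ) :
    ((ZMod.unitsMap h x : (ZMod t)ˣ) : ZMod t) = (((x : ZMod n).val : ℤ) : ZMod t) := by
  rw [unitsMap_val, ZMod.castHom_apply, ← ZMod.natCast_val]
  push_cast
  rfl

lemma unitsMap_eq_one_iff {n t : ℕ} [NeZero n] (h : t ∣ n) (x : (ZMod n)ˣ) :
    ZMod.unitsMap h x = 1 ↔ (t : ℤ) ∣ (((x : ZMod n).val : ℤ) - 1) := by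
  rw [Units.ext_iff, Units.val_one, unitsMap_val' h x,
    show (1 : ZMod t) = ((1 : ℤ) : ZMod t) by push_cast; rfl,
    ZMod.intCast_eq_intCast_iff, Int.modEq_iff_dvd, dvd_sub_comm]

lemma conductor_dvd_of_factorsThrough {n : ℕ} [NeZero n] (χ : DirichletCharacter ℂ n)
    {m : ℕ} (h : χ.FactorsThrough m) : χ.conductor ∣ m := by
  classical
  set f := χ.conductor with hfdef
  have hfn : f ∣ n := χ.conductor_dvd_level
  have hmn : m ∣ n := h.dvd
  have hf0 : f ≠ 0 := χ.conductor_ne_zero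
  have hm0 : m ≠ 0 := by
    rintro rfl
    exact (NeZero.ne n) (Nat.eq_zero_of_zero_dvd hmn)
  set g := Nat.gcd f m with hgdef
  have hgf : g ∣ f := Nat.gcd_dvd_left f m
  have hgn : g ∣ n := hgf.trans hfn
  have hkerm : (ZMod.unitsMap hmn).ker ≤ χ.toUnitHom.ker :=
    (DirichletCharacter.factorsThrough_iff_ker_unitsMap hmn).mp h
  have hkerf : (ZMod.unitsMap hfn).ker ≤ χ.toUnitHom.ker :=
    (DirichletCharacter.factorsThrough_iff_ker_unitsMap hfn).mp χ.factorsThrough_conductor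
  have hft : χ.FactorsThrough g := by
    rw [DirichletCharacter.factorsThrough_iff_ker_unitsMap hgn]
    intro x hx
    rw [MonoidHom.mem_ker] at hx
    set X : ℤ := ((x : ZMod n).val : ℤ) with hXdef
    have hX1 : (g : ℤ) ∣ X - 1 := (unitsMap_eq_one_iff hgn x).mp hx
    obtain ⟨s, hs⟩ := hX1
    set u := Int.gcdA (f : ℤ) (m : ℤ) with hu
    set v := Int.gcdB (f : ℤ) (m : ℤ) with hv
    have hbez : (g : ℤ) = (f : ℤ) * u + (m : ℤ) * v := by
      have h1 := Int.gcd_eq_gcd_ab (f : ℤ) (m : ℤ)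
      have h2 : Int.gcd (f : ℤ) (m : ℤ) = g := by
        rw [hgdef, Int.gcd_natCast_natCast]
      rw [← h2]; exact h1
    set y : ℤ := X - f * (u * s) with hy
    have hyf : (f : ℤ) ∣ y - X := ⟨-(u * s), by rw [hy]; ring⟩
    have hym : (m : ℤ) ∣ y - 1 := ⟨v * s, by rw [hy]; linear_combination hs + s * hbez⟩
    set L := Nat.lcm f m with hL
    have hLn : L ∣ n := Nat.lcm_dvd hfn hmn
    have : NeZero L := ⟨Nat.lcm_ne_zero hf0 hm0⟩
    -- coprimality of y to L
    have hXcop : IsCoprime X (f : ℤ) := by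
      have h1 : Nat.Coprime (x : ZMod n).val n := ZMod.val_coe_unit_coprime x
      have h2 : Nat.Coprime (x : ZMod n).val f := Nat.Coprime.coprime_dvd_right hfn h1
      rw [Int.isCoprime_iff_gcd_eq_one, hXdef, Int.gcd_natCast_natCast]
      exact h2
    have hyfcop : IsCoprime y (f : ℤ) := by
      have hyy : y = X + (f : ℤ) * (-(u * s)) := by rw [hy]; ring
      rw [hyy]; exact hXcop.add_mul_left_left _
    have hymcop : IsCoprime y (m : ℤ) := by
      obtain ⟨t, ht⟩ := hym
      have hyy : y = 1 + (m : ℤ) * t := by linarith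
      rw [hyy]; exact (isCoprime_one_left).add_mul_left_left _
    have hyLcop : IsCoprime y (L : ℤ) := by
      refine (hyfcop.mul_right hymcop).of_isCoprime_of_dvd_right ?_
      exact_mod_cast (Int.natCast_dvd_natCast.mpr (Nat.lcm_dvd_mul f m))
    obtain ⟨A, B, hAB⟩ := hyLcop
    have hYunit : IsUnit ((y : ZMod L)) := by
      apply IsUnit.of_mul_eq_one ((A : ℤ) : ZMod L)
      have hc := congrArg (Int.cast : ℤ → ZMod L) hAB
      push_cast at hc
      rwa [ZMod.natCast_self, mul_zero, add_zero, mul_comm] at hc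
    obtain ⟨Y, hY⟩ := hYunit
    obtain ⟨z, hz⟩ := ZMod.unitsMap_surjective hLn Y
    have hzL : ((ZMod.unitsMap hLn z : (ZMod L)ˣ) : ZMod L) = ((y : ℤ) : ZMod L) := by
      rw [hz, hY]
    have hzm : z ∈ (ZMod.unitsMap hmn).ker := by
      rw [MonoidHom.mem_ker, ← ZMod.unitsMap_comp (Nat.dvd_lcm_right f m) hLn,
        MonoidHom.comp_apply, Units.ext_iff, Units.val_one, unitsMap_val,
        hz, hY, map_intCast]
      have h0 : ((y - 1 : ℤ) : ZMod m) = 0 := (ZMod.intCast_zmod_eq_zero_iff_dvd _ m).mpr hym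
      push_cast at h0
      rw [sub_eq_zero] at h0
      exact_mod_cast h0
    have hzfx : z⁻¹ * x ∈ (ZMod.unitsMap hfn).ker := by
      rw [MonoidHom.mem_ker, map_mul, map_inv]
      have heq : ZMod.unitsMap hfn z = ZMod.unitsMap hfn x := by
        have h1 : ZMod.unitsMap hfn z
            = ZMod.unitsMap (Nat.dvd_lcm_left f m) (ZMod.unitsMap hLn z) := by
          rw [← MonoidHom.comp_apply, ZMod.unitsMap_comp]
        rw [Units.ext_iff, h1, unitsMap_val, hz, hY, map_intCast, unitsMap_val' hfn x]
        have h0 : ((y - X : ℤ) : ZMod f) = 0 := (ZMod.intCast_zmod_eq_zero_iff_dvd _ f).mpr hyf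
        push_cast at h0
        rw [sub_eq_zero] at h0
        exact h0
      rw [heq, inv_mul_cancel]
    rw [MonoidHom.mem_ker, show x = z * (z⁻¹ * x) by group, map_mul,
      hkerm hzm, hkerf hzfx, one_mul]
  have hle : f ≤ g :=
    Nat.sInf_le ((DirichletCharacter.mem_conductorSet_iff χ).mpr hft)
  have hgeq : g = f := le_antisymm (Nat.le_of_dvd (Nat.pos_of_ne_zero hf0) hgf) hle
  exact hgeq ▸ Nat.gcd_dvd_right f m


/-- Let `λ(x) = exp(2πi a x/n)` with `d = gcd(a,n)` and let `χ` be a multiplicative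
character of `(ℤ/nℤ)*` with conductor `f`.  If `f ∤ n/d` then `G(ℤ/nℤ, χ, λ) = 0`;
if `f ∣ n/d`, so that `χ` is induced by a character `χ'` modulo `n/d`, then
`G(ℤ/nℤ, χ, λ) = (φ(n)/φ(n/d)) · G(ℤ/(n/d)ℤ, χ', λ)`. -/
theorem gauss_sum_zmod_reduction (n : ℕ) [NeZero n] (a : ℤ) (d : ℕ)
    (hd : d = Int.gcd a n) [NeZero (n / d)] (hdvd : n / d ∣ n)
    (χ : DirichletCharacter ℂ n) :
    (¬ χ.conductor ∣ n / d →
      (∑ x : (ZMod n)ˣ, χ x * addChar n a (x : ZMod n).val) = 0) ∧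
    (χ.conductor ∣ n / d →
      ∀ χ' : DirichletCharacter ℂ (n / d),
        χ = DirichletCharacter.changeLevel hdvd χ' →
        (∑ x : (ZMod n)ˣ, χ x * addChar n a (x : ZMod n).val) =
          ((Nat.totient n : ℂ) / (Nat.totient (n / d) : ℂ)) *
            ∑ x : (ZMod (n / d))ˣ, χ' x * addChar n a (x : ZMod (n / d)).val) := by
  classical
  have hval : ∀ x : (ZMod n)ˣ,
      (((x : ZMod n).val : ℕ) : ZMod (n / d))
        = ((ZMod.unitsMap hdvd x : (ZMod (n / d))ˣ) : ZMod (n / d)) := by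
    intro x
    rw [unitsMap_val' hdvd x]
    push_cast
    rfl
  constructor
  · -- conductor does not divide n/d : sum vanishes
    intro hnd
    have hnle : ¬ ((ZMod.unitsMap hdvd).ker ≤ χ.toUnitHom.ker) := by
      intro hle
      exact hnd (conductor_dvd_of_factorsThrough χ
        ((DirichletCharacter.factorsThrough_iff_ker_unitsMap hdvd).mpr hle))
    obtain ⟨c, hc1, hc2⟩ := SetLike.not_le_iff_exists.mp hnle
    have hc1' : ZMod.unitsMap hdvd c = 1 := MonoidHom.mem_ker.mp hc1
    have hχc : χ (c : ZMod n) ≠ 1 := by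
      intro hone
      apply hc2
      rw [MonoidHom.mem_ker]
      apply Units.ext
      rw [MulChar.coe_toUnitHom, hone, Units.val_one]
    set S := ∑ x : (ZMod n)ˣ, χ x * addChar n a (x : ZMod n).val with hSdef
    have hS : χ (c : ZMod n) * S = S := by
      rw [hSdef, Finset.mul_sum]
      have hre : S = ∑ x : (ZMod n)ˣ,
          χ ((c * x : (ZMod n)ˣ) : ZMod n) * addChar n a ((c * x : (ZMod n)ˣ) : ZMod n).val := by
        rw [hSdef]
        exact (Equiv.sum_comp (Equiv.mulLeft c)
          (fun x : (ZMod n)ˣ => χ (x : ZMod n) * addChar n a (x : ZMod n).val)).symm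
      rw [← hSdef, hre]
      refine Finset.sum_congr rfl fun x _ => ?_
      have hadd : addChar n a ((c * x : (ZMod n)ˣ) : ZMod n).val
          = addChar n a ((x : ZMod n)).val := by
        apply addChar_congr n a d hd
        rw [hval (c * x), hval x, map_mul, hc1', one_mul]
      rw [hadd, Units.val_mul, map_mul]
      ring
    have hzero : (χ (c : ZMod n) - 1) * S = 0 := by
      rw [sub_mul, one_mul, hS, sub_self]
    rcases mul_eq_zero.mp hzero with h0 | h0
    · exact absurd (sub_eq_zero.mp h0) hχc
    · exact h0
  · -- conductor divides n/d : reduction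
    intro _ χ' hχ'
    have hterm : ∀ x : (ZMod n)ˣ,
        χ (x : ZMod n) * addChar n a (x : ZMod n).val
          = (fun y : (ZMod (n / d))ˣ =>
              χ' (y : ZMod (n / d)) * addChar n a (y : ZMod (n / d)).val)
            (ZMod.unitsMap hdvd x) := by
      intro x
      simp only
      rw [hχ', DirichletCharacter.changeLevel_eq_cast_of_dvd]
      have h1 : χ' (ZMod.cast ((x : ZMod n)))
          = χ' ((ZMod.unitsMap hdvd x : (ZMod (n / d))ˣ) : ZMod (n / d)) := by
        rw [unitsMap_val, ZMod.castHom_apply]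
      have h2 : addChar n a (x : ZMod n).val
          = addChar n a ((ZMod.unitsMap hdvd x : (ZMod (n / d))ˣ) : ZMod (n / d)).val := by
        apply addChar_congr n a d hd
        rw [hval x, ZMod.natCast_val, ZMod.cast_id]
      rw [h1, h2]
    calc (∑ x : (ZMod n)ˣ, χ x * addChar n a (x : ZMod n).val)
        = ∑ x : (ZMod n)ˣ,
            (fun y : (ZMod (n / d))ˣ =>
              χ' (y : ZMod (n / d)) * addChar n a (y : ZMod (n / d)).val)
            (ZMod.unitsMap hdvd x) := Finset.sum_congr rfl fun x _ => hterm x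
      _ = ((Fintype.card (ZMod n)ˣ : ℂ) / (Fintype.card (ZMod (n / d))ˣ : ℂ)) *
            ∑ y : (ZMod (n / d))ˣ, χ' (y : ZMod (n / d)) * addChar n a (y : ZMod (n / d)).val :=
        sum_comp_surjective _ (ZMod.unitsMap_surjective hdvd)
          (fun y : (ZMod (n / d))ˣ => χ' (y : ZMod (n / d)) * addChar n a (y : ZMod (n / d)).val)
      _ = ((Nat.totient n : ℂ) / (Nat.totient (n / d) : ℂ)) *
            ∑ x : (ZMod (n / d))ˣ, χ' x * addChar n a (x : ZMod (n / d)).val := by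
        rw [ZMod.card_units_eq_totient, ZMod.card_units_eq_totient]
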